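/- Let T be a finite tree with at least 3 vertices, let S_i be a connected component of T − C(T) with v_i its unique vertex adjacent to the center, and let S'_i be the subgraph of L(T) induced on the vertex set {e_v : v ∈ V(S_i)}, with A'_i the group of automorphisms of S'_i fixing e_{v_i}. Then for every k ≥ 1, D(S_i;k) = D(S'_i;k), where D(S'_i;k) is defined analogously to D(S_i;k) with e_{v_i} as the fixed root. -/

import Mathlib

open SimpleGraph

universe u

/-- The eccentricity of a vertex: the largest (extended) distance from `v` to any vertex. -/
noncomputable def eccentricity {V : Type u} (T : SimpleGraph V) (v : V) : ℕ∞ :=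
  ⨆ w, T.edist v w

/-- The center `C(T)` of a graph: the set of vertices of minimum eccentricity. -/
noncomputable def centerSet {V : Type u} (T : SimpleGraph V) : Set V :=
  {v | ∀ w, eccentricity T v ≤ eccentricity T w}

/-- The distance from a vertex to the center. -/
noncomputable def distToCenter {V : Type u} (T : SimpleGraph V) (v : V) : ℕ :=
  sInf ((fun c => T.dist v c) '' centerSet T)

/-- A `k`-coloring `f` of `H` distinguishes `H` with respect to the automorphisms of `H`
fixing the root `r` if no nontrivial such automorphism preserves `f`. -/
def IsRootedSB {W : Type u} (H : SimpleGraph W) (r : W) {k : ℕ} (f : W → Fin k) : Prop :=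
  ∀ φ : H ≃g H, φ r = r → (∀ x, f (φ x) = f x) → ∀ x, φ x = x

/-- Two rooted distinguishing `k`-colorings are equivalent when they differ by an
automorphism fixing the root. -/
def rootedSBRel {W : Type u} (H : SimpleGraph W) (r : W) (k : ℕ)
    (f g : {f : W → Fin k // IsRootedSB H r f}) : Prop :=
  ∃ φ : H ≃g H, φ r = r ∧ ∀ x, (f : W → Fin k) x = (g : W → Fin k) (φ x)

/-- `D(H;k)` for the rooted graph `(H, r)`: the number of equivalence classes of `k`-colorings
of `H` which distinguish `H` with respect to the root-fixing automorphism group. -/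
noncomputable def rootedSBCount {W : Type u} (H : SimpleGraph W) (r : W) (k : ℕ) : ℕ :=
  Nat.card (Quot (rootedSBRel H r k))

namespace RSBAux

open SimpleGraph Walk

variable {V : Type u} {T : SimpleGraph V} {S : Set V} {v₀ : V} {o : V → V} {d : V → ℕ}
  {e : V → T.edgeSet}

structure Hyp (T : SimpleGraph V) (S : Set V) (v₀ : V) (o : V → V) (d : V → ℕ)
    (e : V → T.edgeSet) : Prop where
  tree : T.IsTree
  hv₀ : v₀ ∈ S
  hoS : ∀ v ∈ S, v ≠ v₀ → o v ∈ S
  hadj : ∀ v ∈ S, T.Adj v (o v)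
  hdo : ∀ v ∈ S, d (o v) < d v
  hd1 : ∀ x y : V, T.Adj x y → d x ≤ d y + 1
  hov₀ : o v₀ ∉ S
  he : ∀ v ∈ S, (e v : Sym2 V) = s(v, o v)

noncomputable def chain (H : Hyp T S v₀ o d e) (v : V) (hv : v ∈ S) : T.Walk v v₀ :=
  letI := Classical.dec (v = v₀)
  if h : v = v₀ then ((Walk.nil : T.Walk v₀ v₀).copy h.symm rfl)
  else Walk.cons (H.hadj v hv) (chain H (o v) (H.hoS v hv h))
termination_by d v
decreasing_by exact H.hdo v hv

theorem chain_length_root (H : Hyp T S v₀ o d e) (hv : v₀ ∈ S) :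
    (chain H v₀ hv).length = 0 := by
  rw [chain]; simp

theorem chain_length_cons (H : Hyp T S v₀ o d e) (v : V) (hv : v ∈ S) (h : v ≠ v₀) :
    (chain H v hv).length = (chain H (o v) (H.hoS v hv h)).length + 1 := by
  conv_lhs => rw [chain]
  rw [dif_neg h]
  simp

theorem chain_getVert_one (H : Hyp T S v₀ o d e) (v : V) (hv : v ∈ S) (h : v ≠ v₀) :
    (chain H v hv).getVert 1 = o v := by
  conv_lhs => rw [chain]
  rw [dif_neg h]
  rw [Walk.getVert_cons_succ, Walk.getVert_zero]

theorem chain_support (H : Hyp T S v₀ o d e) (v : V) (hv : v ∈ S) :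
    ∀ x ∈ (chain H v hv).support,
      x ∈ S ∧ (x = v ∨ (v ≠ v₀ ∧ (x = o v ∨ d x < d (o v)))) := by
  intro x hx
  rw [chain] at hx
  split_ifs at hx with h
  · subst h
    simp only [Walk.support_copy, Walk.support_nil, List.mem_cons, List.not_mem_nil,
      or_false] at hx
    subst hx
    exact ⟨hv, Or.inl rfl⟩
  · rw [Walk.support_cons, List.mem_cons] at hx
    rcases hx with rfl | hx
    · exact ⟨hv, Or.inl rfl⟩
    · obtain ⟨hxS, hc⟩ := chain_support H (o v) (H.hoS v hv h) x hx
      refine ⟨hxS, Or.inr ⟨h, ?_⟩⟩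
      rcases hc with rfl | ⟨h2, hc⟩
      · exact Or.inl rfl
      · right
        rcases hc with rfl | hlt
        · exact H.hdo _ (H.hoS v hv h)
        · exact hlt.trans (H.hdo _ (H.hoS v hv h))
termination_by d v
decreasing_by exact H.hdo v hv

theorem chain_support_d (H : Hyp T S v₀ o d e) (v : V) (hv : v ∈ S) :
    ∀ x ∈ (chain H v hv).support, d x ≤ d v := by
  intro x hx
  obtain ⟨-, hc⟩ := chain_support H v hv x hx
  rcases hc with rfl | ⟨h, hc⟩
  · exact le_rfl
  · rcases hc with rfl | hlt
    · exact (H.hdo v hv).le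
    · exact le_of_lt (hlt.trans (H.hdo v hv))

theorem chain_isPath (H : Hyp T S v₀ o d e) (v : V) (hv : v ∈ S) :
    (chain H v hv).IsPath := by
  rw [chain]
  split_ifs with h
  · subst h; simp
  · refine Walk.IsPath.cons (chain_isPath H (o v) (H.hoS v hv h)) ?_
    intro hmem
    have := chain_support_d H (o v) (H.hoS v hv h) v hmem
    have := H.hdo v hv
    omega
termination_by d v
decreasing_by exact H.hdo v hv


theorem parent_dichotomy (H : Hyp T S v₀ o d e) {u w : V} (hu : u ∈ S) (hw : w ∈ S)
    (ha : T.Adj u w) : o u = w ∨ o w = u := by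
  by_cases hu0 : u = v₀
  · right
    have hmem : v₀ ∈ (chain H w hw).support := Walk.end_mem_support _
    obtain ⟨-, hc⟩ := chain_support H w hw v₀ hmem
    rcases hc with h | ⟨-, hc⟩
    · exact absurd (hu0.trans h) ha.ne
    · rcases hc with h | hlt
      · rw [hu0]; exact h.symm
      · exfalso
        have h1 := H.hdo w hw
        have h2 := H.hd1 w u ha.symm
        rw [hu0] at h2
        omega
  · by_cases hw0 : w = v₀
    · subst hw0
      left
      have hmem : w ∈ (chain H u hu).support := Walk.end_mem_support _
      obtain ⟨-, hc⟩ := chain_support H u hu w hmem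
      rcases hc with rfl | ⟨-, hc⟩
      · exact absurd rfl ha.ne
      · rcases hc with rfl | hlt
        · rfl
        · exfalso
          have h1 := H.hdo u hu
          have h2 := H.hd1 u w ha
          omega
    · by_contra hcon
      push_neg at hcon
      obtain ⟨hc1, hc2⟩ := hcon
      have hup : u ∉ (chain H w hw).support := by
        intro hmem
        obtain ⟨-, hc⟩ := chain_support H w hw u hmem
        rcases hc with rfl | ⟨-, hc⟩
        · exact ha.ne rfl
        · rcases hc with rfl | hlt
          · exact hc2 rfl
          · have h1 := H.hdo w hw
            have h2 := H.hd1 w u ha.symm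
            omega
      have hp1 : (Walk.cons ha (chain H w hw)).IsPath :=
        (chain_isPath H w hw).cons hup
      have hp2 : (chain H u hu).IsPath := chain_isPath H u hu
      have := H.tree.IsAcyclic.path_unique ⟨_, hp1⟩ ⟨_, hp2⟩
      have hw2 : (Walk.cons ha (chain H w hw)).getVert 1 = (chain H u hu).getVert 1 := by
        rw [Subtype.ext_iff] at this
        exact congrArg (fun p => Walk.getVert p 1) this
      rw [Walk.getVert_cons_succ, Walk.getVert_zero, chain_getVert_one H u hu hu0] at hw2
      exact hc1 hw2.symm


noncomputable def ht (H : Hyp T S v₀ o d e) (v : V) : ℕ :=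
  letI := Classical.dec (v ∈ S)
  if hv : v ∈ S then (chain H v hv).length else 0

theorem ht_eq (H : Hyp T S v₀ o d e) (v : V) (hv : v ∈ S) :
    ht H v = (chain H v hv).length := by rw [ht]; exact dif_pos hv

theorem ht_root (H : Hyp T S v₀ o d e) : ht H v₀ = 0 := by
  rw [ht_eq H v₀ H.hv₀, chain_length_root]

theorem ht_cons (H : Hyp T S v₀ o d e) (v : V) (hv : v ∈ S) (h : v ≠ v₀) :
    ht H v = ht H (o v) + 1 := by
  rw [ht_eq H v hv, ht_eq H (o v) (H.hoS v hv h), chain_length_cons H v hv h]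

theorem ht_adj (H : Hyp T S v₀ o d e) {u w : V} (hu : u ∈ S) (hw : w ∈ S)
    (ha : T.Adj u w) : ht H u = ht H w + 1 ∨ ht H w = ht H u + 1 := by
  rcases parent_dichotomy H hu hw ha with h | h
  · left
    have hu0 : u ≠ v₀ := by rintro rfl; exact H.hov₀ (by rw [h]; exact hw)
    rw [ht_cons H u hu hu0, h]
  · right
    have hw0 : w ≠ v₀ := by rintro rfl; exact H.hov₀ (by rw [h]; exact hu)
    rw [ht_cons H w hw hw0, h]

theorem e_injOn (H : Hyp T S v₀ o d e) {u w : V} (hu : u ∈ S) (hw : w ∈ S)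
    (hew : e u = e w) : u = w := by
  have h1 : (e u : Sym2 V) = s(u, o u) := H.he u hu
  have h2 : (e w : Sym2 V) = s(w, o w) := H.he w hw
  have h3 : s(u, o u) = s(w, o w) := by rw [← h1, ← h2, hew]
  rw [Sym2.eq_iff] at h3
  rcases h3 with ⟨h, -⟩ | ⟨h4, h5⟩
  · exact h
  · exfalso
    have d1 := H.hdo u hu
    have d2 := H.hdo w hw
    rw [h5] at d1
    rw [← h4] at d2
    omega

theorem mem_e (H : Hyp T S v₀ o d e) (v : V) (hv : v ∈ S) : v ∈ (e v : Sym2 V) := by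
  rw [H.he v hv]; exact Sym2.mem_mk_left _ _

theorem mem_e_o (H : Hyp T S v₀ o d e) (v : V) (hv : v ∈ S) : o v ∈ (e v : Sym2 V) := by
  rw [H.he v hv]; exact Sym2.mem_mk_right _ _

noncomputable def chainS (H : Hyp T S v₀ o d e) (v : V) (hv : v ∈ S) :
    (T.induce S).Walk ⟨v, hv⟩ ⟨v₀, H.hv₀⟩ :=
  letI := Classical.dec (v = v₀)
  if h : v = v₀ then ((Walk.nil : (T.induce S).Walk ⟨v₀, H.hv₀⟩ ⟨v₀, H.hv₀⟩).copy
      (Subtype.ext h.symm) rfl)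
  else Walk.cons (by exact H.hadj v hv :
      (T.induce S).Adj ⟨v, hv⟩ ⟨o v, H.hoS v hv h⟩) (chainS H (o v) (H.hoS v hv h))
termination_by d v
decreasing_by exact H.hdo v hv

theorem chainS_length (H : Hyp T S v₀ o d e) (v : V) (hv : v ∈ S) :
    (chainS H v hv).length = ht H v := by
  rw [chainS]
  split_ifs with h
  · subst h; simp [ht_root H]
  · change (chainS H (o v) (H.hoS v hv h)).length + 1 = ht H v
    rw [chainS_length H (o v) (H.hoS v hv h), ht_cons H v hv h]
termination_by d v
decreasing_by exact H.hdo v hv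

theorem lineAdj (H : Hyp T S v₀ o d e) (v : V) (hv : v ∈ S) (h : v ≠ v₀) :
    T.lineGraph.Adj (e v) (e (o v)) := by
  rw [lineGraph_adj_iff_exists]
  constructor
  · intro hc
    exact (H.hadj v hv).ne (e_injOn H hv (H.hoS v hv h) hc)
  · exact ⟨o v, mem_e_o H v hv, mem_e H (o v) (H.hoS v hv h)⟩

noncomputable def chainL (H : Hyp T S v₀ o d e) (v : V) (hv : v ∈ S) :
    (T.lineGraph.induce (e '' S)).Walk ⟨e v, Set.mem_image_of_mem e hv⟩
      ⟨e v₀, Set.mem_image_of_mem e H.hv₀⟩ :=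
  letI := Classical.dec (v = v₀)
  if h : v = v₀ then
    ((Walk.nil : (T.lineGraph.induce (e '' S)).Walk ⟨e v₀, Set.mem_image_of_mem e H.hv₀⟩
        ⟨e v₀, Set.mem_image_of_mem e H.hv₀⟩).copy (Subtype.ext (congrArg e h.symm)) rfl)
  else Walk.cons (by exact lineAdj H v hv h :
      (T.lineGraph.induce (e '' S)).Adj ⟨e v, Set.mem_image_of_mem e hv⟩
        ⟨e (o v), Set.mem_image_of_mem e (H.hoS v hv h)⟩)
    (chainL H (o v) (H.hoS v hv h))
termination_by d v
decreasing_by exact H.hdo v hv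

theorem chainL_length (H : Hyp T S v₀ o d e) (v : V) (hv : v ∈ S) :
    (chainL H v hv).length = ht H v := by
  rw [chainL]
  split_ifs with h
  · subst h; simp [ht_root H]
  · change (chainL H (o v) (H.hoS v hv h)).length + 1 = ht H v
    rw [chainL_length H (o v) (H.hoS v hv h), ht_cons H v hv h]
termination_by d v
decreasing_by exact H.hdo v hv


/-- Characterization of adjacency in the induced line graph. -/
theorem adj_char (H : Hyp T S v₀ o d e) {u w : V} (hu : u ∈ S) (hw : w ∈ S) :
    (T.lineGraph.induce (e '' S)).Adj ⟨e u, Set.mem_image_of_mem e hu⟩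
        ⟨e w, Set.mem_image_of_mem e hw⟩ ↔
      (T.Adj u w ∨ (u ≠ w ∧ u ≠ v₀ ∧ w ≠ v₀ ∧ o u = o w)) := by
  have hiff : (T.lineGraph.induce (e '' S)).Adj ⟨e u, Set.mem_image_of_mem e hu⟩
      ⟨e w, Set.mem_image_of_mem e hw⟩ ↔ T.lineGraph.Adj (e u) (e w) := Iff.rfl
  rw [hiff, lineGraph_adj_iff_exists]
  constructor
  · rintro ⟨hne, x, hx1, hx2⟩
    rw [H.he u hu, Sym2.mem_iff] at hx1
    rw [H.he w hw, Sym2.mem_iff] at hx2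
    have huw : u ≠ w := fun h => hne (by rw [h])
    rcases hx1 with rfl | h1
    · rcases hx2 with rfl | h2
      · exact absurd rfl huw
      · exact Or.inl (by rw [h2]; exact (H.hadj w hw).symm)
    · rcases hx2 with rfl | h2
      · exact Or.inl (by rw [h1]; exact H.hadj u hu)
      · have hoo : o u = o w := h1.symm.trans h2
        have hu0 : u ≠ v₀ := by
          intro h0
          by_cases hw0 : w = v₀
          · exact huw (h0.trans hw0.symm)
          · rw [h0] at hoo
            exact H.hov₀ (by rw [hoo]; exact H.hoS w hw hw0)
        have hw0 : w ≠ v₀ := by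
          intro h0
          rw [h0] at hoo
          exact H.hov₀ (by rw [← hoo]; exact H.hoS u hu hu0)
        exact Or.inr ⟨huw, hu0, hw0, hoo⟩
  · intro hcase
    have huw : u ≠ w := by
      rcases hcase with h | ⟨h, -⟩
      · exact h.ne
      · exact h
    have hne : e u ≠ e w := fun h => huw (e_injOn H hu hw h)
    refine ⟨hne, ?_⟩
    rcases hcase with h | ⟨-, -, -, hoo⟩
    · rcases parent_dichotomy H hu hw h with ho | ho
      · exact ⟨w, ho ▸ mem_e_o H u hu, mem_e H w hw⟩
      · exact ⟨u, mem_e H u hu, ho ▸ mem_e_o H w hw⟩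
    · exact ⟨o u, mem_e_o H u hu, hoo ▸ mem_e_o H w hw⟩


theorem iso_dist_le {W : Type u} {H : SimpleGraph W} (ψ : H ≃g H) (a b : W) :
    H.dist (ψ a) (ψ b) ≤ H.dist a b := by
  by_cases h : H.Reachable a b
  · obtain ⟨p, hp⟩ := h.exists_walk_length_eq_dist
    calc H.dist (ψ a) (ψ b) ≤ (p.map ψ.toHom).length := dist_le _
    _ = p.length := Walk.length_map _ _
    _ = H.dist a b := hp
  · rw [dist_eq_zero_of_not_reachable h, dist_eq_zero_of_not_reachable]
    intro hr
    exact h (by simpa using hr.map ψ.symm.toHom)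

theorem iso_dist_eq {W : Type u} {H : SimpleGraph W} (ψ : H ≃g H) (a b : W) :
    H.dist (ψ a) (ψ b) = H.dist a b := by
  refine le_antisymm (iso_dist_le ψ a b) ?_
  have := iso_dist_le ψ.symm (ψ a) (ψ b)
  simpa using this

theorem ht_le_walk_S (H : Hyp T S v₀ o d e) :
    ∀ (a b : ↥S) (p : (T.induce S).Walk a b), ht H ↑a ≤ p.length + ht H ↑b := by
  intro a b p
  induction p with
  | nil => simp
  | @cons x y z hxy q ih =>
    have ha : T.Adj ↑x ↑y := hxy
    rcases ht_adj H x.2 y.2 ha with h | h <;> rw [Walk.length_cons] <;> omega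

theorem dist_S_eq (H : Hyp T S v₀ o d e) (v : V) (hv : v ∈ S) :
    (T.induce S).dist ⟨v, hv⟩ ⟨v₀, H.hv₀⟩ = ht H v := by
  refine le_antisymm ?_ ?_
  · calc (T.induce S).dist ⟨v, hv⟩ ⟨v₀, H.hv₀⟩ ≤ (chainS H v hv).length := dist_le _
    _ = ht H v := chainS_length H v hv
  · obtain ⟨p, hp⟩ := Reachable.exists_walk_length_eq_dist ⟨chainS H v hv⟩
    have h2 : ht H v ≤ p.length + ht H v₀ := ht_le_walk_S H ⟨v, hv⟩ ⟨v₀, H.hv₀⟩ p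
    rw [hp, ht_root H] at h2
    omega

noncomputable def invE (H : Hyp T S v₀ o d e) (a : ↥(e '' S)) : V := a.2.choose

theorem invE_mem (H : Hyp T S v₀ o d e) (a : ↥(e '' S)) : invE H a ∈ S := a.2.choose_spec.1

theorem e_invE (H : Hyp T S v₀ o d e) (a : ↥(e '' S)) : e (invE H a) = ↑a :=
  a.2.choose_spec.2

theorem mk_e_invE (H : Hyp T S v₀ o d e) (a : ↥(e '' S)) :
    (⟨e (invE H a), Set.mem_image_of_mem e (invE_mem H a)⟩ : ↥(e '' S)) = a :=
  Subtype.ext (e_invE H a)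

theorem invE_e (H : Hyp T S v₀ o d e) (v : V) (hv : v ∈ S) :
    invE H ⟨e v, Set.mem_image_of_mem e hv⟩ = v :=
  e_injOn H (invE_mem H _) hv (e_invE H _)

theorem ht_sib (H : Hyp T S v₀ o d e) {u w : V} (hu : u ∈ S) (hw : w ∈ S)
    (hu0 : u ≠ v₀) (hw0 : w ≠ v₀) (hoo : o u = o w) : ht H u = ht H w := by
  rw [ht_cons H u hu hu0, ht_cons H w hw hw0, hoo]

theorem adj_char' (H : Hyp T S v₀ o d e) (a b : ↥(e '' S))
    (hab : (T.lineGraph.induce (e '' S)).Adj a b) :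
    (T.Adj (invE H a) (invE H b) ∨ (invE H a ≠ invE H b ∧ invE H a ≠ v₀ ∧
      invE H b ≠ v₀ ∧ o (invE H a) = o (invE H b))) := by
  rw [← mk_e_invE H a, ← mk_e_invE H b] at hab
  exact (adj_char H (invE_mem H a) (invE_mem H b)).mp hab

theorem ht_le_walk_L (H : Hyp T S v₀ o d e) :
    ∀ (a b : ↥(e '' S)) (p : (T.lineGraph.induce (e '' S)).Walk a b),
      ht H (invE H a) ≤ p.length + ht H (invE H b) := by
  intro a b p
  induction p with
  | nil => simp
  | @cons x y z hxy q ih =>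
    rcases adj_char' H x y hxy with h | ⟨-, h1, h2, h3⟩
    · rcases ht_adj H (invE_mem H x) (invE_mem H y) h with h | h <;>
        rw [Walk.length_cons] <;> omega
    · have := ht_sib H (invE_mem H x) (invE_mem H y) h1 h2 h3
      rw [Walk.length_cons]
      omega

theorem dist_L_eq (H : Hyp T S v₀ o d e) (v : V) (hv : v ∈ S) :
    (T.lineGraph.induce (e '' S)).dist ⟨e v, Set.mem_image_of_mem e hv⟩
      ⟨e v₀, Set.mem_image_of_mem e H.hv₀⟩ = ht H v := by
  refine le_antisymm ?_ ?_
  · calc (T.lineGraph.induce (e '' S)).dist _ _ ≤ (chainL H v hv).length := dist_le _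
    _ = ht H v := chainL_length H v hv
  · obtain ⟨p, hp⟩ := Reachable.exists_walk_length_eq_dist ⟨chainL H v hv⟩
    have := ht_le_walk_L H _ _ p
    rw [hp, invE_e H v hv, invE_e H v₀ H.hv₀, ht_root H] at this
    omega


theorem ht_iso_S (H : Hyp T S v₀ o d e) (φ : T.induce S ≃g T.induce S)
    (hφ : φ ⟨v₀, H.hv₀⟩ = ⟨v₀, H.hv₀⟩) (x : ↥S) : ht H ↑(φ x) = ht H ↑x := by
  have h1 : (T.induce S).dist (φ x) (φ ⟨v₀, H.hv₀⟩) = (T.induce S).dist x ⟨v₀, H.hv₀⟩ :=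
    iso_dist_eq φ x ⟨v₀, H.hv₀⟩
  rw [hφ] at h1
  have h2 : (T.induce S).dist (φ x) ⟨v₀, H.hv₀⟩ = ht H ↑(φ x) := dist_S_eq H ↑(φ x) (φ x).2
  have h3 : (T.induce S).dist x ⟨v₀, H.hv₀⟩ = ht H ↑x := dist_S_eq H ↑x x.2
  rw [h2, h3] at h1
  exact h1

theorem ne_root_iff (H : Hyp T S v₀ o d e) (φ : T.induce S ≃g T.induce S)
    (hφ : φ ⟨v₀, H.hv₀⟩ = ⟨v₀, H.hv₀⟩) (x : ↥S) (hx : ↑x ≠ v₀) : ↑(φ x) ≠ v₀ := by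
  intro h0
  apply hx
  have : φ x = φ ⟨v₀, H.hv₀⟩ := by rw [hφ]; exact Subtype.ext h0
  have := φ.injective this
  rw [this]

theorem o_comm (H : Hyp T S v₀ o d e) (φ : T.induce S ≃g T.induce S)
    (hφ : φ ⟨v₀, H.hv₀⟩ = ⟨v₀, H.hv₀⟩) (v : V) (hv : v ∈ S) (h : v ≠ v₀) :
    ↑(φ ⟨o v, H.hoS v hv h⟩) = o ↑(φ ⟨v, hv⟩) := by
  have hadjS : (T.induce S).Adj ⟨v, hv⟩ ⟨o v, H.hoS v hv h⟩ := H.hadj v hv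
  have hadj2 : (T.induce S).Adj (φ ⟨v, hv⟩) (φ ⟨o v, H.hoS v hv h⟩) :=
    φ.map_rel_iff.mpr hadjS
  have hadjT : T.Adj ↑(φ ⟨v, hv⟩) ↑(φ ⟨o v, H.hoS v hv h⟩) := hadj2
  have hu := (φ ⟨v, hv⟩).2
  have hq := (φ ⟨o v, H.hoS v hv h⟩).2
  rcases parent_dichotomy H hu hq hadjT with hd | hd
  · exact hd.symm
  · exfalso
    -- bad case : o q = u where u = φ v, q = φ (o v)
    have e1 : ht H ↑(φ ⟨v, hv⟩) = ht H v := ht_iso_S H φ hφ ⟨v, hv⟩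
    have e2 : ht H ↑(φ ⟨o v, H.hoS v hv h⟩) = ht H (o v) := ht_iso_S H φ hφ _
    have e3 : ht H v = ht H (o v) + 1 := ht_cons H v hv h
    by_cases hq0 : ↑(φ ⟨o v, H.hoS v hv h⟩) = v₀
    · rw [hq0] at hd
      exact H.hov₀ (by rw [hd]; exact hu)
    · have e4 := ht_cons H ↑(φ ⟨o v, H.hoS v hv h⟩) hq hq0
      rw [hd] at e4
      omega


/-- The transported relation on `S`. -/
def Rel' (T : SimpleGraph V) (v₀ : V) (o : V → V) (x y : V) : Prop :=
  T.Adj x y ∨ (x ≠ y ∧ x ≠ v₀ ∧ y ≠ v₀ ∧ o x = o y)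

theorem step_fwd (H : Hyp T S v₀ o d e) (φ : T.induce S ≃g T.induce S)
    (hφ : φ ⟨v₀, H.hv₀⟩ = ⟨v₀, H.hv₀⟩) (x y : ↥S) (hr : Rel' T v₀ o ↑x ↑y) :
    Rel' T v₀ o ↑(φ x) ↑(φ y) := by
  rcases hr with h | ⟨h1, h2, h3, h4⟩
  · left
    exact φ.map_rel_iff.mpr (h : (T.induce S).Adj x y)
  · right
    refine ⟨?_, ne_root_iff H φ hφ x h2, ne_root_iff H φ hφ y h3, ?_⟩
    · intro h0
      exact h1 (congrArg Subtype.val (φ.injective (Subtype.ext h0)))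
    · have c1 := o_comm H φ hφ ↑x x.2 h2
      have c2 := o_comm H φ hφ ↑y y.2 h3
      rw [← c1, ← c2]
      congr 1
      exact congrArg φ (Subtype.ext h4)

theorem adj_char_rel (H : Hyp T S v₀ o d e) {u w : V} (hu : u ∈ S) (hw : w ∈ S) :
    (T.lineGraph.induce (e '' S)).Adj ⟨e u, Set.mem_image_of_mem e hu⟩
        ⟨e w, Set.mem_image_of_mem e hw⟩ ↔ Rel' T v₀ o u w := by
  rw [adj_char H hu hw]
  unfold Rel'
  constructor
  · rintro (h | ⟨h1, h2, h3, h4⟩)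
    · exact Or.inl h
    · exact Or.inr ⟨h1, h2, h3, h4⟩
  · rintro (h | ⟨h1, h2, h3, h4⟩)
    · exact Or.inl h
    · exact Or.inr ⟨h1, h2, h3, h4⟩

noncomputable def eMap (H : Hyp T S v₀ o d e) (φ : T.induce S ≃g T.induce S)
    (a : ↥(e '' S)) : ↥(e '' S) :=
  ⟨e ↑(φ ⟨invE H a, invE_mem H a⟩),
    Set.mem_image_of_mem e (φ ⟨invE H a, invE_mem H a⟩).2⟩

theorem eMap_mk (H : Hyp T S v₀ o d e) (φ : T.induce S ≃g T.induce S) (x : ↥S) :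
    eMap H φ ⟨e ↑x, Set.mem_image_of_mem e x.2⟩ =
      ⟨e ↑(φ x), Set.mem_image_of_mem e (φ x).2⟩ := by
  unfold eMap
  have h1 : (⟨invE H ⟨e ↑x, Set.mem_image_of_mem e x.2⟩,
      invE_mem H ⟨e ↑x, Set.mem_image_of_mem e x.2⟩⟩ : ↥S) = x :=
    Subtype.ext (invE_e H ↑x x.2)
  exact Subtype.ext (congrArg (fun z : ↥S => (e ↑(φ z) : T.edgeSet)) h1)

theorem eMap_eMap (H : Hyp T S v₀ o d e) (φ χ : T.induce S ≃g T.induce S) (a : ↥(e '' S)) :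
    eMap H χ (eMap H φ a) =
      ⟨e ↑(χ (φ ⟨invE H a, invE_mem H a⟩)),
        Set.mem_image_of_mem e (χ (φ ⟨invE H a, invE_mem H a⟩)).2⟩ := by
  have h0 : eMap H φ a = ⟨e ↑(φ ⟨invE H a, invE_mem H a⟩),
      Set.mem_image_of_mem e (φ ⟨invE H a, invE_mem H a⟩).2⟩ := rfl
  rw [h0, eMap_mk H χ (φ ⟨invE H a, invE_mem H a⟩)]

/-- Forward transfer of root-fixing automorphisms. -/
theorem fwd (H : Hyp T S v₀ o d e) (φ : T.induce S ≃g T.induce S)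
    (hφ : φ ⟨v₀, H.hv₀⟩ = ⟨v₀, H.hv₀⟩) :
    ∃ ψ : T.lineGraph.induce (e '' S) ≃g T.lineGraph.induce (e '' S),
      ψ ⟨e v₀, Set.mem_image_of_mem e H.hv₀⟩ = ⟨e v₀, Set.mem_image_of_mem e H.hv₀⟩ ∧
      ∀ (v : V) (hv : v ∈ S),
        ψ ⟨e v, Set.mem_image_of_mem e hv⟩ =
          ⟨e ↑(φ ⟨v, hv⟩), Set.mem_image_of_mem e (φ ⟨v, hv⟩).2⟩ := by
  have hφ' : φ.symm ⟨v₀, H.hv₀⟩ = ⟨v₀, H.hv₀⟩ := by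
    apply φ.injective
    rw [RelIso.apply_symm_apply, hφ]
  have hinv : ∀ (χ χ' : T.induce S ≃g T.induce S), (∀ y, χ' (χ y) = y) →
      ∀ a, eMap H χ' (eMap H χ a) = a := by
    intro χ χ' hcc a
    rw [eMap_eMap, hcc]
    exact mk_e_invE H a
  refine ⟨⟨⟨eMap H φ, eMap H φ.symm,
      hinv φ φ.symm (fun y => φ.symm_apply_apply y),
      hinv φ.symm φ (fun y => φ.apply_symm_apply y)⟩, ?_⟩, ?_, ?_⟩
  · intro a b
    simp only [Equiv.coe_fn_mk]
    have hA : (T.lineGraph.induce (e '' S)).Adj (eMap H φ a) (eMap H φ b) ↔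
        Rel' T v₀ o ↑(φ ⟨invE H a, invE_mem H a⟩) ↑(φ ⟨invE H b, invE_mem H b⟩) :=
      adj_char_rel H (φ ⟨invE H a, invE_mem H a⟩).2 (φ ⟨invE H b, invE_mem H b⟩).2
    have hB := adj_char_rel H (invE_mem H a) (invE_mem H b)
    rw [mk_e_invE H a, mk_e_invE H b] at hB
    rw [hA, hB]
    constructor
    · intro h
      have h2 := step_fwd H φ.symm hφ' (φ ⟨invE H a, invE_mem H a⟩)
        (φ ⟨invE H b, invE_mem H b⟩) h
      rwa [φ.symm_apply_apply, φ.symm_apply_apply] at h2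
    · exact step_fwd H φ hφ ⟨invE H a, invE_mem H a⟩ ⟨invE H b, invE_mem H b⟩
  · have h0 : (⟨e v₀, Set.mem_image_of_mem e H.hv₀⟩ : ↥(e '' S)) =
        ⟨e ↑(⟨v₀, H.hv₀⟩ : ↥S), Set.mem_image_of_mem e (⟨v₀, H.hv₀⟩ : ↥S).2⟩ := rfl
    show eMap H φ _ = _
    rw [h0, eMap_mk H φ ⟨v₀, H.hv₀⟩, hφ]
  · intro v hv
    have h0 : (⟨e v, Set.mem_image_of_mem e hv⟩ : ↥(e '' S)) =
        ⟨e ↑(⟨v, hv⟩ : ↥S), Set.mem_image_of_mem e (⟨v, hv⟩ : ↥S).2⟩ := rfl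
    show eMap H φ _ = _
    rw [h0, eMap_mk H φ ⟨v, hv⟩]

noncomputable def sMap (H : Hyp T S v₀ o d e)
    (ψ : T.lineGraph.induce (e '' S) ≃g T.lineGraph.induce (e '' S)) (x : ↥S) : ↥S :=
  ⟨invE H (ψ ⟨e ↑x, Set.mem_image_of_mem e x.2⟩),
    invE_mem H (ψ ⟨e ↑x, Set.mem_image_of_mem e x.2⟩)⟩

theorem e_sMap (H : Hyp T S v₀ o d e)
    (ψ : T.lineGraph.induce (e '' S) ≃g T.lineGraph.induce (e '' S)) (x : ↥S) :
    (⟨e ↑(sMap H ψ x), Set.mem_image_of_mem e (sMap H ψ x).2⟩ : ↥(e '' S)) =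
      ψ ⟨e ↑x, Set.mem_image_of_mem e x.2⟩ :=
  Subtype.ext (e_invE H (ψ ⟨e ↑x, Set.mem_image_of_mem e x.2⟩))

theorem sMap_sMap (H : Hyp T S v₀ o d e)
    (ψ χ : T.lineGraph.induce (e '' S) ≃g T.lineGraph.induce (e '' S))
    (hcc : ∀ a, χ (ψ a) = a) (x : ↥S) : sMap H χ (sMap H ψ x) = x := by
  have h1 : sMap H χ (sMap H ψ x) =
      ⟨invE H (χ (ψ ⟨e ↑x, Set.mem_image_of_mem e x.2⟩)),
        invE_mem H (χ (ψ ⟨e ↑x, Set.mem_image_of_mem e x.2⟩))⟩ := by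
    unfold sMap
    exact Subtype.ext (congrArg (fun z => invE H (χ z)) (e_sMap H ψ x))
  rw [h1, hcc]
  exact Subtype.ext (invE_e H ↑x x.2)

theorem sMap_root (H : Hyp T S v₀ o d e)
    (ψ : T.lineGraph.induce (e '' S) ≃g T.lineGraph.induce (e '' S))
    (hψ : ψ ⟨e v₀, Set.mem_image_of_mem e H.hv₀⟩ = ⟨e v₀, Set.mem_image_of_mem e H.hv₀⟩) :
    sMap H ψ ⟨v₀, H.hv₀⟩ = ⟨v₀, H.hv₀⟩ := by
  unfold sMap
  apply Subtype.ext
  have h1 : ψ ⟨e ↑(⟨v₀, H.hv₀⟩ : ↥S), Set.mem_image_of_mem e (⟨v₀, H.hv₀⟩ : ↥S).2⟩ =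
      ⟨e v₀, Set.mem_image_of_mem e H.hv₀⟩ := hψ
  exact (congrArg (invE H) h1).trans (invE_e H v₀ H.hv₀)

theorem ht_sMap (H : Hyp T S v₀ o d e)
    (ψ : T.lineGraph.induce (e '' S) ≃g T.lineGraph.induce (e '' S))
    (hψ : ψ ⟨e v₀, Set.mem_image_of_mem e H.hv₀⟩ = ⟨e v₀, Set.mem_image_of_mem e H.hv₀⟩)
    (x : ↥S) : ht H ↑(sMap H ψ x) = ht H ↑x := by
  have h1 : (T.lineGraph.induce (e '' S)).dist (ψ ⟨e ↑x, Set.mem_image_of_mem e x.2⟩)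
      (ψ ⟨e v₀, Set.mem_image_of_mem e H.hv₀⟩) =
      (T.lineGraph.induce (e '' S)).dist ⟨e ↑x, Set.mem_image_of_mem e x.2⟩
        ⟨e v₀, Set.mem_image_of_mem e H.hv₀⟩ := iso_dist_eq ψ _ _
  rw [hψ] at h1
  rw [← e_sMap H ψ x] at h1
  have h2 := dist_L_eq H ↑(sMap H ψ x) (sMap H ψ x).2
  have h3 := dist_L_eq H ↑x x.2
  rw [h2, h3] at h1
  exact h1

theorem sMap_adj (H : Hyp T S v₀ o d e)
    (ψ : T.lineGraph.induce (e '' S) ≃g T.lineGraph.induce (e '' S))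
    (hψ : ψ ⟨e v₀, Set.mem_image_of_mem e H.hv₀⟩ = ⟨e v₀, Set.mem_image_of_mem e H.hv₀⟩)
    (x y : ↥S) (hxy : (T.induce S).Adj x y) :
    (T.induce S).Adj (sMap H ψ x) (sMap H ψ y) := by
  have hT : T.Adj ↑x ↑y := hxy
  have hL : (T.lineGraph.induce (e '' S)).Adj ⟨e ↑x, Set.mem_image_of_mem e x.2⟩
      ⟨e ↑y, Set.mem_image_of_mem e y.2⟩ :=
    (adj_char_rel H x.2 y.2).mpr (Or.inl hT)
  have hL2 := ψ.map_rel_iff.mpr hL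
  rw [← e_sMap H ψ x, ← e_sMap H ψ y] at hL2
  have := (adj_char_rel H (sMap H ψ x).2 (sMap H ψ y).2).mp hL2
  rcases this with h | ⟨-, h1, h2, h3⟩
  · exact h
  · exfalso
    have e1 := ht_sMap H ψ hψ x
    have e2 := ht_sMap H ψ hψ y
    have e3 := ht_sib H (sMap H ψ x).2 (sMap H ψ y).2 h1 h2 h3
    rcases ht_adj H x.2 y.2 hT with h | h <;> omega

/-- Backward transfer of root-fixing automorphisms. -/
theorem bwd (H : Hyp T S v₀ o d e)
    (ψ : T.lineGraph.induce (e '' S) ≃g T.lineGraph.induce (e '' S))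
    (hψ : ψ ⟨e v₀, Set.mem_image_of_mem e H.hv₀⟩ = ⟨e v₀, Set.mem_image_of_mem e H.hv₀⟩) :
    ∃ φ : T.induce S ≃g T.induce S, φ ⟨v₀, H.hv₀⟩ = ⟨v₀, H.hv₀⟩ ∧
      ∀ (v : V) (hv : v ∈ S),
        ψ ⟨e v, Set.mem_image_of_mem e hv⟩ =
          ⟨e ↑(φ ⟨v, hv⟩), Set.mem_image_of_mem e (φ ⟨v, hv⟩).2⟩ := by
  have hψ' : ψ.symm ⟨e v₀, Set.mem_image_of_mem e H.hv₀⟩ =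
      ⟨e v₀, Set.mem_image_of_mem e H.hv₀⟩ := by
    apply ψ.injective
    rw [RelIso.apply_symm_apply, hψ]
  refine ⟨⟨⟨sMap H ψ, sMap H ψ.symm,
      sMap_sMap H ψ ψ.symm (fun a => ψ.symm_apply_apply a),
      sMap_sMap H ψ.symm ψ (fun a => ψ.apply_symm_apply a)⟩, ?_⟩, ?_, ?_⟩
  · intro x y
    simp only [Equiv.coe_fn_mk]
    constructor
    · intro h
      have h2 := sMap_adj H ψ.symm hψ' _ _ h
      rwa [sMap_sMap H ψ ψ.symm (fun a => ψ.symm_apply_apply a),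
        sMap_sMap H ψ ψ.symm (fun a => ψ.symm_apply_apply a)] at h2
    · exact sMap_adj H ψ hψ x y
  · exact sMap_root H ψ hψ
  · intro v hv
    have h0 : (⟨e v, Set.mem_image_of_mem e hv⟩ : ↥(e '' S)) =
        ⟨e ↑(⟨v, hv⟩ : ↥S), Set.mem_image_of_mem e (⟨v, hv⟩ : ↥S).2⟩ := rfl
    rw [h0, ← e_sMap H ψ ⟨v, hv⟩]
    rfl

noncomputable def trCol (H : Hyp T S v₀ o d e) {k : ℕ} (f : ↥S → Fin k) :
    ↥(e '' S) → Fin k :=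
  fun a => f ⟨invE H a, invE_mem H a⟩

noncomputable def trEquiv (H : Hyp T S v₀ o d e) (k : ℕ) :
    (↥S → Fin k) ≃ (↥(e '' S) → Fin k) where
  toFun := trCol H
  invFun g := fun x => g ⟨e ↑x, Set.mem_image_of_mem e x.2⟩
  left_inv f := by
    funext x
    exact congrArg f (Subtype.ext (invE_e H ↑x x.2))
  right_inv g := by
    funext a
    exact congrArg g (mk_e_invE H a)


theorem sb_iff (H : Hyp T S v₀ o d e) {k : ℕ} (f : ↥S → Fin k) :
    IsRootedSB (T.induce S) ⟨v₀, H.hv₀⟩ f ↔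
      IsRootedSB (T.lineGraph.induce (e '' S)) ⟨e v₀, Set.mem_image_of_mem e H.hv₀⟩
        (trCol H f) := by
  constructor
  · intro hf ψ hψroot hψcol
    obtain ⟨φ, hφroot, comm⟩ := bwd H ψ hψroot
    have hφcol : ∀ x, f (φ x) = f x := by
      intro x
      have k1 : (⟨invE H ⟨e ↑(φ ⟨↑x, x.2⟩),
          Set.mem_image_of_mem e (φ ⟨↑x, x.2⟩).2⟩,
          invE_mem H ⟨e ↑(φ ⟨↑x, x.2⟩), Set.mem_image_of_mem e (φ ⟨↑x, x.2⟩).2⟩⟩ : ↥S) =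
          φ ⟨↑x, x.2⟩ :=
        Subtype.ext (invE_e H ↑(φ ⟨↑x, x.2⟩) (φ ⟨↑x, x.2⟩).2)
      have k2 : (⟨invE H ⟨e ↑x, Set.mem_image_of_mem e x.2⟩,
          invE_mem H ⟨e ↑x, Set.mem_image_of_mem e x.2⟩⟩ : ↥S) = x :=
        Subtype.ext (invE_e H ↑x x.2)
      calc f (φ x) = f (φ ⟨↑x, x.2⟩) := rfl
      _ = trCol H f ⟨e ↑(φ ⟨↑x, x.2⟩), Set.mem_image_of_mem e (φ ⟨↑x, x.2⟩).2⟩ :=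
        (congrArg f k1).symm
      _ = trCol H f (ψ ⟨e ↑x, Set.mem_image_of_mem e x.2⟩) :=
        (congrArg (trCol H f) (comm ↑x x.2)).symm
      _ = trCol H f ⟨e ↑x, Set.mem_image_of_mem e x.2⟩ := hψcol _
      _ = f x := congrArg f k2
    have hid := hf φ hφroot hφcol
    intro a
    rw [← mk_e_invE H a, comm (invE H a) (invE_mem H a)]
    exact Subtype.ext (congrArg (fun z : ↥S => (e ↑z : T.edgeSet))
      (hid ⟨invE H a, invE_mem H a⟩))
  · intro hg φ hφroot hφcol
    obtain ⟨ψ, hψroot, comm⟩ := fwd H φ hφroot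
    have hψcol : ∀ a, trCol H f (ψ a) = trCol H f a := by
      intro a
      have c1 : ψ a = ⟨e ↑(φ ⟨invE H a, invE_mem H a⟩),
          Set.mem_image_of_mem e (φ ⟨invE H a, invE_mem H a⟩).2⟩ :=
        (congrArg ψ (mk_e_invE H a).symm).trans (comm (invE H a) (invE_mem H a))
      have k1 : (⟨invE H ⟨e ↑(φ ⟨invE H a, invE_mem H a⟩),
          Set.mem_image_of_mem e (φ ⟨invE H a, invE_mem H a⟩).2⟩,
          invE_mem H ⟨e ↑(φ ⟨invE H a, invE_mem H a⟩),
            Set.mem_image_of_mem e (φ ⟨invE H a, invE_mem H a⟩).2⟩⟩ : ↥S) =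
          φ ⟨invE H a, invE_mem H a⟩ :=
        Subtype.ext (invE_e H _ (φ ⟨invE H a, invE_mem H a⟩).2)
      calc trCol H f (ψ a)
          = trCol H f ⟨e ↑(φ ⟨invE H a, invE_mem H a⟩),
              Set.mem_image_of_mem e (φ ⟨invE H a, invE_mem H a⟩).2⟩ :=
            congrArg (trCol H f) c1
      _ = f (φ ⟨invE H a, invE_mem H a⟩) := congrArg f k1
      _ = f ⟨invE H a, invE_mem H a⟩ := hφcol _
      _ = trCol H f a := rfl
    have hid := hg ψ hψroot hψcol
    intro x
    have c2 := comm ↑x x.2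
    rw [hid ⟨e ↑x, Set.mem_image_of_mem e x.2⟩] at c2
    have c3 : (↑x : V) = ↑(φ ⟨↑x, x.2⟩) :=
      e_injOn H x.2 (φ ⟨↑x, x.2⟩).2 (congrArg Subtype.val c2)
    exact (Subtype.ext c3).symm

theorem rel_iff (H : Hyp T S v₀ o d e) {k : ℕ} (f g : ↥S → Fin k) :
    (∃ φ : T.induce S ≃g T.induce S, φ ⟨v₀, H.hv₀⟩ = ⟨v₀, H.hv₀⟩ ∧
        ∀ x, f x = g (φ x)) ↔
      (∃ ψ : T.lineGraph.induce (e '' S) ≃g T.lineGraph.induce (e '' S),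
        ψ ⟨e v₀, Set.mem_image_of_mem e H.hv₀⟩ = ⟨e v₀, Set.mem_image_of_mem e H.hv₀⟩ ∧
        ∀ a, trCol H f a = trCol H g (ψ a)) := by
  constructor
  · rintro ⟨φ, hφroot, hc⟩
    obtain ⟨ψ, hψroot, comm⟩ := fwd H φ hφroot
    refine ⟨ψ, hψroot, ?_⟩
    intro a
    have c1 : ψ a = ⟨e ↑(φ ⟨invE H a, invE_mem H a⟩),
        Set.mem_image_of_mem e (φ ⟨invE H a, invE_mem H a⟩).2⟩ :=
      (congrArg ψ (mk_e_invE H a).symm).trans (comm (invE H a) (invE_mem H a))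
    have k1 : (⟨invE H ⟨e ↑(φ ⟨invE H a, invE_mem H a⟩),
        Set.mem_image_of_mem e (φ ⟨invE H a, invE_mem H a⟩).2⟩,
        invE_mem H ⟨e ↑(φ ⟨invE H a, invE_mem H a⟩),
          Set.mem_image_of_mem e (φ ⟨invE H a, invE_mem H a⟩).2⟩⟩ : ↥S) =
        φ ⟨invE H a, invE_mem H a⟩ :=
      Subtype.ext (invE_e H _ (φ ⟨invE H a, invE_mem H a⟩).2)
    calc trCol H f a = f ⟨invE H a, invE_mem H a⟩ := rfl
    _ = g (φ ⟨invE H a, invE_mem H a⟩) := hc _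
    _ = trCol H g ⟨e ↑(φ ⟨invE H a, invE_mem H a⟩),
          Set.mem_image_of_mem e (φ ⟨invE H a, invE_mem H a⟩).2⟩ := (congrArg g k1).symm
    _ = trCol H g (ψ a) := (congrArg (trCol H g) c1).symm
  · rintro ⟨ψ, hψroot, hc⟩
    obtain ⟨φ, hφroot, comm⟩ := bwd H ψ hψroot
    refine ⟨φ, hφroot, ?_⟩
    intro x
    have k2 : (⟨invE H ⟨e ↑x, Set.mem_image_of_mem e x.2⟩,
        invE_mem H ⟨e ↑x, Set.mem_image_of_mem e x.2⟩⟩ : ↥S) = x :=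
      Subtype.ext (invE_e H ↑x x.2)
    have k1 : (⟨invE H ⟨e ↑(φ ⟨↑x, x.2⟩),
        Set.mem_image_of_mem e (φ ⟨↑x, x.2⟩).2⟩,
        invE_mem H ⟨e ↑(φ ⟨↑x, x.2⟩), Set.mem_image_of_mem e (φ ⟨↑x, x.2⟩).2⟩⟩ : ↥S) =
        φ ⟨↑x, x.2⟩ :=
      Subtype.ext (invE_e H ↑(φ ⟨↑x, x.2⟩) (φ ⟨↑x, x.2⟩).2)
    calc f x = trCol H f ⟨e ↑x, Set.mem_image_of_mem e x.2⟩ := (congrArg f k2).symm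
    _ = trCol H g (ψ ⟨e ↑x, Set.mem_image_of_mem e x.2⟩) := hc _
    _ = trCol H g ⟨e ↑(φ ⟨↑x, x.2⟩), Set.mem_image_of_mem e (φ ⟨↑x, x.2⟩).2⟩ :=
      congrArg (trCol H g) (comm ↑x x.2)
    _ = g (φ ⟨↑x, x.2⟩) := congrArg g k1
    _ = g (φ x) := rfl

theorem count_eq (H : Hyp T S v₀ o d e) (k : ℕ) :
    rootedSBCount (T.induce S) ⟨v₀, H.hv₀⟩ k =
      rootedSBCount (T.lineGraph.induce (e '' S)) ⟨e v₀, Set.mem_image_of_mem e H.hv₀⟩ k := by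
  unfold rootedSBCount
  apply Nat.card_congr
  refine Quot.congr (Equiv.subtypeEquiv (trEquiv H k) (fun f => sb_iff H f)) ?_
  intro a b
  exact rel_iff H a.1 b.1

end RSBAux

/-- Let `T` be a finite tree with at least 3 vertices, let `S = S_i` be a connected component
of `T − C(T)` with `v₀ = v_i` its unique vertex adjacent to the center, and let `S' = S'_i` be
the subgraph of `L(T)` induced on `{e_v : v ∈ S}`, where for a non-central vertex `v`, `e_v` is
the first edge of the unique path from `v` to the center (and `e_u = e_w = {u,w}` when
`C(T) = {u,w}` is an edge).  Then for every `k ≥ 1`, `D(S;k) = D(S';k)`, the rooted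
distinguishing counts with respective roots `v₀` and `e_{v₀}`. -/
theorem rootedSBCount_component_eq_lineGraph {V : Type u} [Fintype V]
    (T : SimpleGraph V) (hT : T.IsTree) (hcard : 3 ≤ Fintype.card V)
    -- `e` is the association `v ↦ e_v` of edges to non-central (and central-edge) vertices:
    (e : V → T.edgeSet)
    (he₁ : ∀ v : V, v ∉ centerSet T →
      ∃ p : V, T.Adj v p ∧ distToCenter T p < distToCenter T v ∧ (e v : Sym2 V) = s(v, p))
    (he₂ : ∀ u w : V, u ≠ w → centerSet T = {u, w} →
      (e u : Sym2 V) = s(u, w) ∧ (e w : Sym2 V) = s(u, w))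
    -- `S` is a connected component of `T − C(T)`:
    (S : Set V)
    (hSC : S ∩ centerSet T = ∅)
    (hSconn : (T.induce S).Connected)
    (hSclosed : ∀ a ∈ S, ∀ b : V, b ∉ centerSet T → T.Adj a b → b ∈ S)
    -- `v₀` is the unique vertex of `S` adjacent to the center:
    (v₀ : V) (hv₀ : v₀ ∈ S)
    (hv₀adj : ∃ c ∈ centerSet T, T.Adj v₀ c)
    (hv₀uniq : ∀ x ∈ S, (∃ c ∈ centerSet T, T.Adj x c) → x = v₀) :
    ∀ k : ℕ, 1 ≤ k →
      rootedSBCount (T.induce S) ⟨v₀, hv₀⟩ k =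
        rootedSBCount (T.lineGraph.induce (e '' S)) ⟨e v₀, Set.mem_image_of_mem e hv₀⟩ k := by
  intro k _
  classical
  have hconn : T.Connected := hT.isConnected
  have hne : (centerSet T).Nonempty := by
    have : Nonempty V := ⟨v₀⟩
    obtain ⟨c, hc⟩ := Finite.exists_min (eccentricity T)
    exact ⟨c, hc⟩
  have hSCnot : ∀ v ∈ S, v ∉ centerSet T := fun v hv hc =>
    (Set.eq_empty_iff_forall_notMem.mp hSC v) ⟨hv, hc⟩
  have hd_le : ∀ (v c : V), c ∈ centerSet T → distToCenter T v ≤ T.dist v c :=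
    fun v c hc => Nat.sInf_le ⟨c, hc, rfl⟩
  have hd_ex : ∀ v : V, ∃ c ∈ centerSet T, T.dist v c = distToCenter T v := by
    intro v
    have him : ((fun c => T.dist v c) '' centerSet T).Nonempty := hne.image _
    obtain ⟨c, hc, hcd⟩ := Nat.sInf_mem him
    exact ⟨c, hc, hcd⟩
  have hd1 : ∀ x y : V, T.Adj x y → distToCenter T x ≤ distToCenter T y + 1 := by
    intro x y ha
    obtain ⟨c, hc, hcd⟩ := hd_ex y
    have h1 : T.dist x c ≤ T.dist x y + T.dist y c := hconn.dist_triangle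
    have h2 : T.dist x y = 1 := dist_eq_one_iff_adj.mpr ha
    have h3 := hd_le x c hc
    omega
  have hd0 : ∀ v : V, distToCenter T v = 0 → v ∈ centerSet T := by
    intro v h0
    obtain ⟨c, hc, hcd⟩ := hd_ex v
    rw [h0] at hcd
    have : v = c := hconn.dist_eq_zero_iff.mp hcd
    rw [this]; exact hc
  have he₁' : ∀ v : V, ∃ p : V, v ∉ centerSet T →
      T.Adj v p ∧ distToCenter T p < distToCenter T v ∧ (e v : Sym2 V) = s(v, p) := by
    intro v
    by_cases h : v ∉ centerSet T
    · obtain ⟨p, h1, h2, h3⟩ := he₁ v h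
      exact ⟨p, fun _ => ⟨h1, h2, h3⟩⟩
    · exact ⟨v, fun h' => absurd h' h⟩
  choose o ho using he₁'
  have hdv₀ : distToCenter T v₀ = 1 := by
    obtain ⟨c, hc, hadjc⟩ := hv₀adj
    have h1 : distToCenter T v₀ ≤ 1 := by
      have := hd_le v₀ c hc
      rw [dist_eq_one_iff_adj.mpr hadjc] at this
      exact this
    have h2 : distToCenter T v₀ ≠ 0 := fun h0 => hSCnot v₀ hv₀ (hd0 v₀ h0)
    omega
  have H : RSBAux.Hyp T S v₀ o (distToCenter T) e := by
    refine ⟨hT, hv₀, ?_, ?_, ?_, hd1, ?_, ?_⟩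
    · intro v hv hne0
      have hno := hSCnot v hv
      obtain ⟨h1, h2, h3⟩ := ho v hno
      have hoc : o v ∉ centerSet T := by
        intro hc
        exact hne0 (hv₀uniq v hv ⟨o v, hc, h1⟩)
      exact hSclosed v hv (o v) hoc h1
    · exact fun v hv => (ho v (hSCnot v hv)).1
    · exact fun v hv => (ho v (hSCnot v hv)).2.1
    · -- o v₀ ∉ S
      have hno := hSCnot v₀ hv₀
      obtain ⟨h1, h2, h3⟩ := ho v₀ hno
      rw [hdv₀] at h2
      have : distToCenter T (o v₀) = 0 := by omega
      have hc := hd0 _ this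
      exact fun hS => hSCnot _ hS hc
    · exact fun v hv => (ho v (hSCnot v hv)).2.2
  exact RSBAux.count_eq H k
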